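/- Let M ∈ SL(2,ℂ) and let H be a 2×2 complex Hermitian matrix with det H ≠ 0. If conj(M)ᵀ · H · M = H, then tr(M) is a real number. -/
import Mathlib


open Matrix

/-- If `M ∈ SL(2,ℂ)` preserves a nondegenerate Hermitian form `H`
(`conj(M)ᵀ H M = H`), then `tr M` is real. -/
theorem trace_real_of_invariant_hermitian (M H : Matrix (Fin 2) (Fin 2) ℂ)
    (hM : M.det = 1) (hH : H.IsHermitian) (hd : H.det ≠ 0)
    (hinv : Mᴴ * H * M = H) :
    ∃ t : ℝ, M.trace = (t : ℂ) := by
  have hMdet : IsUnit M.det := by simp [hM]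
  have hHdet : IsUnit H.det := isUnit_iff_ne_zero.mpr hd
  have h1 : Mᴴ * H = H * M⁻¹ := by
    have := congrArg (· * M⁻¹) hinv
    simpa [mul_assoc, Matrix.mul_nonsing_inv M hMdet] using this
  have h2 : Mᴴ = H * M⁻¹ * H⁻¹ := by
    have := congrArg (· * H⁻¹) h1
    simpa [mul_assoc, Matrix.mul_nonsing_inv H hHdet] using this
  have htr : star M.trace = M⁻¹.trace := by
    rw [← Matrix.trace_conjTranspose, h2, Matrix.trace_mul_cycle,
      Matrix.nonsing_inv_mul H hHdet, Matrix.one_mul]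
  have hinvtr : M⁻¹.trace = M.trace := by
    rw [Matrix.inv_def, hM]
    simp [Matrix.trace_fin_two, Matrix.adjugate_fin_two]
    ring
  have hreal : star M.trace = M.trace := htr.trans hinvtr
  refine ⟨M.trace.re, ?_⟩
  exact ((Complex.conj_eq_iff_re).mp hreal).symm
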